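/- Let C be a bounded convex subset of M with nonempty interior and 0 ∈ int C, and let W : ℝ^d × M → [0,+∞] be Borel measurable with W(x,ξ) = +∞ whenever ξ ∉ cl(C). Assume (H2): for every compact set K ⊆ int C, the function x ↦ sup_{ξ∈K} W(x,ξ) is essentially bounded on every compact subset of ℝ^d. Then HW(ξ) < +∞ for every ξ ∈ int C, and HW(ξ) = +∞ for every ξ ∉ cl(C); in other words, int C ⊆ {ξ : HW(ξ) < +∞} ⊆ cl(C). -/

import Mathlib

open MeasureTheory
open scoped Pointwise ENNReal

/-- The open cube `(0,n)^d` in `ℝ^d`. -/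
def cube (d n : ℕ) : Set (Fin d → ℝ) := {x | ∀ i, x i ∈ Set.Ioo (0 : ℝ) (n : ℝ)}

/-- The homogenized density. -/
noncomputable def HF {d m : ℕ}
    (F : (Fin d → ℝ) → ((Fin d → ℝ) →L[ℝ] (Fin m → ℝ)) → ℝ≥0∞)
    (ξ : (Fin d → ℝ) →L[ℝ] (Fin m → ℝ)) : ℝ≥0∞ :=
  ⨅ (n : ℕ) (_ : 1 ≤ n),
    (1 / (n : ℝ≥0∞) ^ d) *
      ⨅ (φ : (Fin d → ℝ) → (Fin m → ℝ)) (_ : ∃ K, LipschitzWith K φ)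
        (_ : ∀ x ∉ cube d n, φ x = 0),
        ∫⁻ x in cube d n, F x (ξ + fderiv ℝ φ x) ∂volume

section Aux

open scoped NNReal

variable {d m n : ℕ}

lemma cube_eq (d n : ℕ) :
    cube d n = Set.pi Set.univ (fun _ : Fin d => Set.Ioo (0:ℝ) (n:ℝ)) := by
  ext x; simp [cube, Set.mem_pi]

lemma isOpen_cube (d n : ℕ) : IsOpen (cube d n) := by
  rw [cube_eq]; exact isOpen_set_pi Set.finite_univ (fun i _ => isOpen_Ioo)

lemma volume_cube (d n : ℕ) : volume (cube d n) = (n : ℝ≥0∞) ^ d := by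
  rw [cube_eq, volume_pi_pi]
  simp [Real.volume_Ioo]

lemma icc_eq (d n : ℕ) :
    Set.Icc (0 : Fin d → ℝ) (fun _ => (n:ℝ))
      = Set.pi Set.univ (fun _ : Fin d => Set.Icc (0:ℝ) (n:ℝ)) := by
  ext x
  simp [Set.mem_Icc, Pi.le_def, Set.mem_pi, forall_and]

lemma volume_icc (d n : ℕ) :
    volume (Set.Icc (0 : Fin d → ℝ) (fun _ => (n:ℝ))) = (n : ℝ≥0∞) ^ d := by
  rw [icc_eq, volume_pi_pi]
  simp [Real.volume_Icc]

lemma cube_subset_icc (d n : ℕ) :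
    cube d n ⊆ Set.Icc (0 : Fin d → ℝ) (fun _ => (n:ℝ)) := by
  intro x hx
  constructor <;> intro i
  · exact le_of_lt (hx i).1
  · exact le_of_lt (hx i).2

lemma closure_cube_subset (d n : ℕ) :
    closure (cube d n) ⊆ Set.Icc (0 : Fin d → ℝ) (fun _ => (n:ℝ)) :=
  closure_minimal (cube_subset_icc d n) isClosed_Icc

lemma volume_icc_diff_cube (d n : ℕ) :
    volume (Set.Icc (0 : Fin d → ℝ) (fun _ => (n:ℝ)) \ cube d n) = 0 := by
  rw [measure_diff (cube_subset_icc d n) (isOpen_cube d n).measurableSet.nullMeasurableSet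
    (by rw [volume_cube]; exact ENNReal.pow_ne_top (ENNReal.natCast_ne_top n)),
    volume_cube, volume_icc, tsub_self]

lemma fderiv_zero_outside {φ : (Fin d → ℝ) → (Fin m → ℝ)}
    (h0 : ∀ x ∉ cube d n, φ x = 0) :
    ∀ x ∉ closure (cube d n), fderiv ℝ φ x = 0 := by
  intro x hx
  have hmem : (closure (cube d n))ᶜ ∈ nhds x :=
    (isClosed_closure.isOpen_compl).mem_nhds hx
  have heq : φ =ᶠ[nhds x] (fun _ => 0) := by
    filter_upwards [hmem] with y hy
    exact h0 y (fun h => hy (subset_closure h))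
  rw [heq.fderiv_eq, fderiv_fun_const]
  rfl

lemma integrable_fderiv {K : ℝ≥0} {φ : (Fin d → ℝ) → (Fin m → ℝ)}
    (hK : LipschitzWith K φ) (h0 : ∀ x ∉ cube d n, φ x = 0) :
    Integrable (fun x => fderiv ℝ φ x) volume := by
  rw [← integrableOn_iff_integrable_of_support_subset (f := fun x => fderiv ℝ φ x)
    (s := Set.Icc (0 : Fin d → ℝ) (fun _ => (n:ℝ)))]
  · refine Measure.integrableOn_of_bounded (M := (K:ℝ))
      (by rw [volume_icc]; exact ENNReal.pow_ne_top (ENNReal.natCast_ne_top n))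
      (measurable_fderiv ℝ φ).aestronglyMeasurable ?_
    filter_upwards with x
    exact norm_fderiv_le_of_lipschitz ℝ hK
  · intro x hx
    by_contra hxc
    exact hx (fderiv_zero_outside h0 x (fun h => hxc (closure_cube_subset d n h)))

lemma integral_fderiv_eq_zero {K : ℝ≥0} {φ : (Fin d → ℝ) → (Fin m → ℝ)}
    (hK : LipschitzWith K φ) (h0 : ∀ x ∉ cube d n, φ x = 0) :
    ∫ x, fderiv ℝ φ x ∂volume = 0 := by
  have hint := integrable_fderiv hK h0
  refine ContinuousLinearMap.ext fun v => ?_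
  rw [ContinuousLinearMap.integral_apply hint v]
  have hintv : Integrable (fun x => fderiv ℝ φ x v) volume :=
    (ContinuousLinearMap.apply ℝ (Fin m → ℝ) v).integrable_comp hint
  funext j
  set P : (Fin m → ℝ) →L[ℝ] ℝ := ContinuousLinearMap.proj (R := ℝ) (φ := fun _ : Fin m => ℝ) j
    with hP
  rw [show ((∫ x, fderiv ℝ φ x v ∂volume) j) = P (∫ x, fderiv ℝ φ x v ∂volume) from rfl,
    ← ContinuousLinearMap.integral_comp_comm _ hintv]
  set ψ : (Fin d → ℝ) → ℝ := fun x => φ x j with hψdef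
  have hψ : LipschitzWith (1 * K) ψ := (LipschitzWith.eval j).comp hK
  have hψc : HasCompactSupport ψ := by
    refine HasCompactSupport.intro (isCompact_Icc
      (a := (0 : Fin d → ℝ)) (b := fun _ => (n:ℝ))) (fun x hx => ?_)
    simp [hψdef, h0 x (fun h => hx (cube_subset_icc d n h))]
  have hlc : ∀ (x : Fin d → ℝ) (w : Fin d → ℝ),
      lineDeriv ℝ (fun _ : Fin d → ℝ => (1:ℝ)) x w = 0 := by
    intro x w
    rw [(differentiableAt_const (1:ℝ)).lineDeriv_eq_fderiv]
    simp
  have hline : ∫ x, lineDeriv ℝ ψ x v ∂volume = 0 := by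
    have h1 := LipschitzWith.integral_lineDeriv_mul_eq (μ := volume)
      (LipschitzWith.const (α := Fin d → ℝ) (b := (1:ℝ))) hψ hψc (-v)
    simp only [hlc, zero_mul, integral_zero, neg_neg, mul_one] at h1
    exact h1.symm
  have hae : ∀ᵐ x, P (fderiv ℝ φ x v) = lineDeriv ℝ ψ x v := by
    filter_upwards [hK.ae_differentiableAt (μ := volume)] with x hx
    have hψd : DifferentiableAt ℝ ψ x := (P.differentiableAt).comp x hx
    rw [hψd.lineDeriv_eq_fderiv]
    have hcomp : fderiv ℝ ψ x = P.comp (fderiv ℝ φ x) :=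
      (P.hasFDerivAt.comp x hx.hasFDerivAt).fderiv
    rw [hcomp]
    rfl
  rw [integral_congr_ae hae, hline]
  simp

lemma lintegral_eq_top {C : Set ((Fin d → ℝ) →L[ℝ] (Fin m → ℝ))}
    (hconv : Convex ℝ C)
    (W : (Fin d → ℝ) → ((Fin d → ℝ) →L[ℝ] (Fin m → ℝ)) → ℝ≥0∞)
    (hdom : ∀ x ξ, ξ ∉ closure C → W x ξ = ⊤)
    {ξ : (Fin d → ℝ) →L[ℝ] (Fin m → ℝ)} (hξ : ξ ∉ closure C)
    (hn : 1 ≤ n) {K : ℝ≥0} {φ : (Fin d → ℝ) → (Fin m → ℝ)}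
    (hK : LipschitzWith K φ) (h0 : ∀ x ∉ cube d n, φ x = 0) :
    ∫⁻ x in cube d n, W x (ξ + fderiv ℝ φ x) ∂volume = ⊤ := by
  set Q := cube d n with hQdef
  have hvolQ : volume Q = (n:ℝ≥0∞)^d := volume_cube d n
  have hn0 : (n : ℝ≥0∞) ≠ 0 := Nat.cast_ne_zero.mpr (by omega)
  have hQ0 : volume Q ≠ 0 := by rw [hvolQ]; exact pow_ne_zero d hn0
  have hQtop : volume Q ≠ ⊤ := by
    rw [hvolQ]; exact ENNReal.pow_ne_top (ENNReal.natCast_ne_top n)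
  have hI0 : ∫ x in Q, fderiv ℝ φ x ∂volume = 0 := by
    rw [setIntegral_eq_integral_of_ae_compl_eq_zero, integral_fderiv_eq_zero hK h0]
    filter_upwards [measure_eq_zero_iff_ae_notMem.1 (volume_icc_diff_cube d n)] with x hx hxQ
    by_cases hB : x ∈ Set.Icc (0 : Fin d → ℝ) (fun _ => (n:ℝ))
    · exact absurd ⟨hB, hxQ⟩ hx
    · exact fderiv_zero_outside h0 x (fun h => hB (closure_cube_subset d n h))
  have hDint : IntegrableOn (fun x => ξ + fderiv ℝ φ x) Q volume :=
    (integrableOn_const (C := ξ) hQtop enorm_ne_top).add (integrable_fderiv hK h0).integrableOn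
  have havg : (⨍ x in Q, (ξ + fderiv ℝ φ x) ∂volume) = ξ := by
    rw [setAverage_eq, integral_add (integrableOn_const (C := ξ) hQtop enorm_ne_top)
      (integrable_fderiv hK h0).integrableOn, hI0, add_zero, setIntegral_const,
      smul_smul, inv_mul_cancel₀ (a := volume.real Q) (ENNReal.toReal_ne_zero.2 ⟨hQ0, hQtop⟩), one_smul]
  by_cases hmem : ∀ᵐ x ∂(volume.restrict Q), ξ + fderiv ℝ φ x ∈ closure C
  · exact absurd (havg ▸ hconv.closure.set_average_mem isClosed_closure hQ0 hQtop hmem hDint) hξ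
  · rw [ae_iff] at hmem
    set S := {x | ξ + fderiv ℝ φ x ∉ closure C} with hSdef
    have hSm : MeasurableSet S :=
      (measurable_const.add (measurable_fderiv ℝ φ)) isClosed_closure.measurableSet.compl
    refine top_le_iff.1 ?_
    calc (⊤ : ℝ≥0∞) = ⊤ * (volume.restrict Q) S := (ENNReal.top_mul hmem).symm
      _ = ∫⁻ _ in S, ⊤ ∂(volume.restrict Q) := by rw [setLIntegral_const]
      _ = ∫⁻ x in S, W x (ξ + fderiv ℝ φ x) ∂(volume.restrict Q) := by
          refine (setLIntegral_congr_fun hSm (fun x hx => ?_)).symm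
          exact hdom _ _ hx
      _ ≤ ∫⁻ x, W x (ξ + fderiv ℝ φ x) ∂(volume.restrict Q) := setLIntegral_le_lintegral _ _

end Aux

/-- Under (H2), `int C ⊆ dom HW ⊆ cl C`. -/
theorem stmt_5 {d m : ℕ} (hd : 0 < d)
    {C : Set ((Fin d → ℝ) →L[ℝ] (Fin m → ℝ))}
    (hconv : Convex ℝ C) (hbdd : Bornology.IsBounded C)
    (hint : (interior C).Nonempty) (h0 : 0 ∈ interior C)
    (W : (Fin d → ℝ) → ((Fin d → ℝ) →L[ℝ] (Fin m → ℝ)) → ℝ≥0∞)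
    (hWmeas : Measurable (Function.uncurry W))
    (hdom : ∀ x ξ, ξ ∉ closure C → W x ξ = ⊤)
    (hH2 : ∀ K : Set ((Fin d → ℝ) →L[ℝ] (Fin m → ℝ)), IsCompact K → K ⊆ interior C →
      ∀ Q : Set (Fin d → ℝ), IsCompact Q →
        essSup (fun x => ⨆ ξ ∈ K, W x ξ) (volume.restrict Q) < ⊤) :
    (∀ ξ ∈ interior C, HF W ξ < ⊤) ∧ (∀ ξ, ξ ∉ closure C → HF W ξ = ⊤) := by
  constructor
  · intro ξ hξ
    set B : Set (Fin d → ℝ) := Set.Icc (0 : Fin d → ℝ) (fun _ => ((1:ℕ):ℝ)) with hBdef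
    have hc := hH2 {ξ} isCompact_singleton (Set.singleton_subset_iff.2 hξ) B isCompact_Icc
    have hgeq : (fun x => ⨆ ξ' ∈ ({ξ} : Set _), W x ξ') = fun x => W x ξ := by
      funext x; simp
    rw [hgeq] at hc
    have hb : ∀ᵐ x ∂(volume.restrict B), W x ξ ≤ essSup (fun x => W x ξ) (volume.restrict B) :=
      ENNReal.ae_le_essSup _
    have hle : HF W ξ ≤ (1 / (1 : ℝ≥0∞) ^ d) * ∫⁻ x in cube d 1,
        W x (ξ + fderiv ℝ (fun _ => (0 : Fin m → ℝ)) x) ∂volume := by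
      refine le_trans (iInf₂_le 1 le_rfl) ?_
      simp only [Nat.cast_one]
      refine mul_le_mul_right ?_ _
      exact iInf_le_of_le (fun _ => 0) (iInf_le_of_le ⟨0, LipschitzWith.const 0⟩
        (iInf_le_of_le (fun _ _ => rfl) le_rfl))
    have hfd : ∀ x : Fin d → ℝ, fderiv ℝ (fun _ => (0 : Fin m → ℝ)) x = 0 := by
      intro x; rw [fderiv_fun_const]; rfl
    simp only [hfd, add_zero, one_pow, one_div, inv_one, one_mul] at hle
    refine lt_of_le_of_lt hle (lt_of_le_of_lt ?_ (ENNReal.mul_lt_top hc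
        (lt_of_le_of_lt (le_of_eq (volume_icc d 1)) (by simp))))
    calc ∫⁻ x in cube d 1, W x ξ ∂volume
        ≤ ∫⁻ x in B, W x ξ ∂volume := lintegral_mono_set (cube_subset_icc d 1)
      _ ≤ ∫⁻ _ in B, essSup (fun x => W x ξ) (volume.restrict B) ∂volume :=
          lintegral_mono_ae hb
      _ = essSup (fun x => W x ξ) (volume.restrict B) * volume B := setLIntegral_const _ _
  · intro ξ hξ
    refine iInf_eq_top.2 fun n => iInf_eq_top.2 fun hn => ?_
    have hinner : (⨅ (φ : (Fin d → ℝ) → (Fin m → ℝ)) (_ : ∃ K, LipschitzWith K φ)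
        (_ : ∀ x ∉ cube d n, φ x = 0),
        ∫⁻ x in cube d n, W x (ξ + fderiv ℝ φ x) ∂volume) = ⊤ := by
      refine iInf_eq_top.2 fun φ => iInf_eq_top.2 fun hlip => iInf_eq_top.2 fun hz => ?_
      obtain ⟨K, hK⟩ := hlip
      exact lintegral_eq_top hconv W hdom hξ hn hK hz
    rw [hinner, ENNReal.mul_top]
    rw [one_div]
    exact ENNReal.inv_ne_zero.2 (ENNReal.pow_ne_top (ENNReal.natCast_ne_top n))
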